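/- arXiv:1701.05296 — 3 statements merged into one kernel-verified Lean document; each statement's English description precedes it below -/
import Mathlib

section
/- Consider the n-vertex even cycle graph with vertices u_1,…,u_n (indices mod n) and sink u_n. Suppose real numbers η_1,…,η_{n-1} in [0,1] and β > 0 satisfy the steady-state equations: η_1 = η_2/2 + β, η_{n-1} = η_{n-2}/2 + β, and for 2 ≤ i ≤ n-2, η_i = (η_{i-1} + η_{i+1})/2 + β. Then β ≤ 4/n². -/
/-- Exact-rate bound for the even cycle with sink `u_n`: the steady-state
equations force `β ≤ 4/n²`. -/
theorem cycle_rate_bound (n : ℕ) (hn : 4 ≤ n) (heven : Even n)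
    (η : ℕ → ℝ) (β : ℝ) (hβ : 0 < β)
    (hrange : ∀ i, 1 ≤ i → i ≤ n - 1 → 0 ≤ η i ∧ η i ≤ 1)
    (h1 : η 1 = η 2 / 2 + β)
    (hlast : η (n - 1) = η (n - 2) / 2 + β)
    (hmid : ∀ i, 2 ≤ i → i ≤ n - 2 → η i = (η (i - 1) + η (i + 1)) / 2 + β) :
    β ≤ 4 / (n : ℝ) ^ 2 := by
  obtain ⟨m, hm⟩ := heven
  have hm2 : 2 ≤ m := by omega
  have key : ∀ k, k + 1 ≤ n - 1 →
      η (k + 1) = η 1 * (k + 1) - β * ((k + 1) * k) := by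
    intro k
    induction k using Nat.strong_induction_on with
    | _ k ih =>
      intro hk
      match k with
      | 0 => push_cast; ring
      | 1 =>
        have : η 2 = 2 * (η 1 - β) := by linarith
        rw [this]; push_cast; ring
      | (j + 2) =>
        have hmidj := hmid (j + 2) (by omega) (by omega)
        have e : j + 2 - 1 = j + 1 := by omega
        rw [e] at hmidj
        have ih1 := ih (j + 1) (by omega) (by omega)
        have ih0 := ih j (by omega) (by omega)
        have : η (j + 2 + 1) = 2 * η (j + 2) - η (j + 1) - 2 * β := by
          linarith
        rw [this, ih1, ih0]
        push_cast
        ring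
  -- value at n-1 and n-2
  have e1 : n - 2 + 1 = n - 1 := by omega
  have e2 : n - 3 + 1 = n - 2 := by omega
  have k1 := key (n - 2) (by omega)
  have k2 := key (n - 3) (by omega)
  rw [e1] at k1
  rw [e2] at k2
  have c1 : ((n - 1 : ℕ) : ℝ) = (n : ℝ) - 1 := by
    push_cast [Nat.cast_sub (by omega : 1 ≤ n)]; ring
  have c2 : ((n - 2 : ℕ) : ℝ) = (n : ℝ) - 2 := by
    push_cast [Nat.cast_sub (by omega : 2 ≤ n)]; ring
  have c3 : ((n - 3 : ℕ) : ℝ) = (n : ℝ) - 3 := by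
    push_cast [Nat.cast_sub (by omega : 3 ≤ n)]; ring
  rw [c2] at k1
  rw [c3] at k2
  set N : ℝ := (n : ℝ) with hN
  have hNpos : (0 : ℝ) < N := by
    rw [hN]; exact_mod_cast (by omega : 0 < n)
  have ha : η 1 = β * (N - 1) := by
    have hlin : η 1 * N = β * (N - 1) * N := by
      rw [k1, k2] at hlast; nlinarith [hlast]
    exact mul_right_cancel₀ (ne_of_gt hNpos) hlin
  -- value at m
  have em : m - 1 + 1 = m := by omega
  have km := key (m - 1) (by omega)
  rw [em] at km
  have cm : ((m - 1 : ℕ) : ℝ) = (m : ℝ) - 1 := by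
    push_cast [Nat.cast_sub (by omega : 1 ≤ m)]; ring
  rw [cm, ha] at km
  have hmN : (m : ℝ) * 2 = N := by
    rw [hN]; push_cast [hm]; ring
  have hm' : (m : ℝ) = N / 2 := by linarith
  have hval : η m = β * N ^ 2 / 4 := by
    rw [km, hm']; ring
  have hub := (hrange m (by omega) (by omega)).2
  rw [hval] at hub
  rw [le_div_iff₀ (by positivity : (0:ℝ) < N ^ 2)]
  linarith
end

section
/- Let η_0, η_1, …, η_x be real numbers with η_0 = 0 and η_x ≤ 1, and β > 0, satisfying for every r with 1 ≤ r ≤ x the equation β · (∑_{i=r}^{x} C(x,i)) = (η_r − η_{r-1}) · (r/x) · C(x,r). Then β ≤ 5 / (x · (3/2)^x). -/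
private lemma key_ineq : ∀ n : ℕ, (n : ℝ) + 1 ≤ (5/2) * (4/3) ^ n
  | 0 => by norm_num
  | 1 => by norm_num
  | (k+2) => by
      have ih := key_ineq (k+1)
      have hp : (4/3 : ℝ) ≤ (4/3) ^ (k+1) := by
        calc (4/3 : ℝ) = (4/3)^1 := (pow_one _).symm
        _ ≤ (4/3)^(k+1) := pow_le_pow_right₀ (by norm_num) (by omega)
      push_cast at *
      rw [pow_succ]
      nlinarith

/-- Exact-rate bound for the x-dimensional hypercube with all non-sink nodes as
sources: the cut steady-state equations force `β ≤ 5/(x·(3/2)^x)`. -/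
theorem hypercube_rate_bound (x : ℕ) (hx : 1 ≤ x) (η : ℕ → ℝ) (β : ℝ)
    (hβ : 0 < β) (h0 : η 0 = 0) (hx1 : η x ≤ 1)
    (hcut : ∀ r, 1 ≤ r → r ≤ x →
      β * (∑ i ∈ Finset.Icc r x, (x.choose i : ℝ)) =
        (η r - η (r - 1)) * ((r : ℝ) / x) * (x.choose r : ℝ)) :
    β ≤ 5 / ((x : ℝ) * (3 / 2) ^ x) := by
  have hxR : (0:ℝ) < x := by exact_mod_cast hx
  -- sum of binomials over Icc 1 x equals 2^x - 1
  have hsplit : Finset.range (x+1) = insert 0 (Finset.Icc 1 x) := by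
    ext i
    simp only [Finset.mem_range, Finset.mem_insert, Finset.mem_Icc, Nat.lt_succ_iff]
    omega
  have hsum : (∑ i ∈ Finset.Icc 1 x, (x.choose i : ℝ)) = 2 ^ x - 1 := by
    have h1 : (∑ i ∈ Finset.range (x+1), (x.choose i : ℝ)) = 2 ^ x := by
      exact_mod_cast Nat.sum_range_choose x
    rw [hsplit, Finset.sum_insert (by simp)] at h1
    simp only [Nat.choose_zero_right, Nat.cast_one] at h1
    linarith
  -- from the cut equation at r = 1 : η 1 = β * (2^x - 1)
  have h1 := hcut 1 le_rfl hx
  rw [hsum] at h1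
  simp only [Nat.choose_one_right, Nat.cast_one, h0, sub_zero] at h1
  have hη1 : η 1 = β * (2 ^ x - 1) := by
    have hr : η 1 * (1 / (x:ℝ)) * (x:ℝ) = η 1 := by
      field_simp
    rw [hr] at h1
    exact h1.symm
  -- monotonicity: η (r-1) < η r for 1 ≤ r ≤ x
  have hmono : ∀ r, 1 ≤ r → r ≤ x → η (r-1) ≤ η r := by
    intro r hr1 hrx
    have hc := hcut r hr1 hrx
    have hS : (0:ℝ) < ∑ i ∈ Finset.Icc r x, (x.choose i : ℝ) := by
      apply Finset.sum_pos
      · intro i hi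
        simp only [Finset.mem_Icc] at hi
        exact_mod_cast Nat.choose_pos hi.2
      · exact ⟨x, Finset.mem_Icc.mpr ⟨hrx, le_rfl⟩⟩
    have hcoef : (0:ℝ) < ((r : ℝ) / x) * (x.choose r : ℝ) := by
      apply mul_pos (div_pos (by exact_mod_cast hr1) hxR)
      exact_mod_cast Nat.choose_pos hrx
    have hpos : 0 < (η r - η (r-1)) * (((r : ℝ) / x) * (x.choose r : ℝ)) := by
      rw [← mul_assoc, ← hc]; exact mul_pos hβ hS
    nlinarith
  -- hence η 1 ≤ η x
  have hchain : ∀ r, 1 ≤ r → r ≤ x → η 1 ≤ η r := by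
    intro r
    induction r with
    | zero => intro h _; omega
    | succ k ih =>
      intro _ hkx
      by_cases hk : k = 0
      · subst hk; norm_num
      · have hk1 : 1 ≤ k := Nat.one_le_iff_ne_zero.mpr hk
        have := hmono (k+1) (by omega) hkx
        simp only [Nat.add_sub_cancel] at this
        exact le_trans (ih hk1 (by omega)) this
  have hβbound : β * (2 ^ x - 1) ≤ 1 := by
    rw [← hη1]; exact le_trans (hchain x hx le_rfl) hx1
  -- key inequality: x * (3/2)^x ≤ 5 * (2^x - 1)
  have hkey : (x:ℝ) * (3/2) ^ x ≤ 5 * (2 ^ x - 1) := by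
    have h1 := key_ineq x
    have h2 : ((4:ℝ)/3) ^ x * (3/2) ^ x = 2 ^ x := by
      rw [← mul_pow]; norm_num
    have h3 : (0:ℝ) < (3/2) ^ x := by positivity
    have h4 : (2:ℝ) ≤ 2 ^ x := by
      calc (2:ℝ) = 2^1 := (pow_one _).symm
      _ ≤ 2^x := pow_le_pow_right₀ (by norm_num) hx
    nlinarith [mul_le_mul_of_nonneg_right h1 h3.le]
  have hpos : (0:ℝ) < (x:ℝ) * (3/2) ^ x := by positivity
  rw [le_div_iff₀ hpos]
  nlinarith [mul_le_mul_of_nonneg_left hkey hβ.le]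
end

section
/- Consider the x-dimensional hypercube steady-state system with only two sources located at Hamming distances x and x−1 from the all-zeros sink: real numbers η_0 = 0, η_1, …, η_x with η_x ≤ 1 and β > 0 satisfying β = (η_x − η_{x−1}) and, for 1 ≤ r ≤ x−1, 2β = (η_r − η_{r−1})·(r/x)·C(x,r). Then β ≤ 2^x / (2x + 2^x). -/
lemma choose_le_two_pow' (n k : ℕ) : n.choose k ≤ 2 ^ n := by
  by_cases h : k ≤ n
  · calc n.choose k ≤ ∑ m ∈ Finset.range (n + 1), n.choose m :=
        Finset.single_le_sum (fun i _ => Nat.zero_le _)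
          (Finset.mem_range.mpr (Nat.lt_succ_of_le h))
    _ = 2 ^ n := Nat.sum_range_choose n
  · simp [Nat.choose_eq_zero_of_lt (lt_of_not_ge h)]

/-- Exact-rate bound for the x-dimensional hypercube with two sources at
distances `x` and `x-1` from the sink: `β ≤ 2^x / (2x + 2^x)`. -/
theorem hypercube_two_sources_rate (x : ℕ) (hx : 2 ≤ x) (η : ℕ → ℝ) (β : ℝ)
    (hβ : 0 < β) (h0 : η 0 = 0) (hηx : η x ≤ 1)
    (htop : β = η x - η (x - 1))
    (hcut : ∀ r, 1 ≤ r → r ≤ x - 1 →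
      2 * β = (η r - η (r - 1)) * ((r : ℝ) / x) * (x.choose r : ℝ)) :
    β ≤ (2 : ℝ) ^ x / (2 * x + 2 ^ x) := by
  have hx1 : (2 : ℝ) ≤ (x : ℝ) := by exact_mod_cast hx
  have hxpos : (0 : ℝ) < x := by linarith
  have hpow : (0 : ℝ) < 2 ^ (x - 1) := by positivity
  -- step lower bound: 2β ≤ (η (i+1) - η i) * 2^(x-1)
  have hstep : ∀ i ∈ Finset.range (x - 1),
      2 * β ≤ (η (i + 1) - η i) * 2 ^ (x - 1) := by
    intro i hi
    rw [Finset.mem_range] at hi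
    have h := hcut (i + 1) (Nat.le_add_left 1 i) hi
    simp only [Nat.add_sub_cancel] at h
    set d := η (i + 1) - η i with hd
    have hid : x * (x - 1).choose i = x.choose (i + 1) * (i + 1) := by
      have := Nat.add_one_mul_choose_eq (x - 1) i
      rwa [
        Nat.sub_add_cancel (by omega : 1 ≤ x)] at this
    have hle : ((i + 1 : ℕ) : ℝ) * (x.choose (i + 1) : ℝ) ≤ (x : ℝ) * 2 ^ (x - 1) := by
      have h2 : x * (x - 1).choose i ≤ x * 2 ^ (x - 1) :=
        Nat.mul_le_mul_left x (choose_le_two_pow' (x - 1) i)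
      calc ((i + 1 : ℕ) : ℝ) * (x.choose (i + 1) : ℝ)
          = ((x * (x - 1).choose i : ℕ) : ℝ) := by
            rw [hid]; push_cast; ring
        _ ≤ ((x * 2 ^ (x - 1) : ℕ) : ℝ) := by exact_mod_cast h2
        _ = (x : ℝ) * 2 ^ (x - 1) := by push_cast; ring
    have hcoefpos : (0 : ℝ) < ((i + 1 : ℕ) : ℝ) / x * (x.choose (i + 1) : ℝ) := by
      have hch : 0 < x.choose (i + 1) := Nat.choose_pos (by omega)
      have : (0 : ℝ) < (x.choose (i + 1) : ℝ) := by exact_mod_cast hch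
      positivity
    have key : 2 * β = d * (((i + 1 : ℕ) : ℝ) / x * (x.choose (i + 1) : ℝ)) := by
      rw [h]; push_cast; ring
    have hdpos : 0 < d := by
      by_contra hneg
      push_neg at hneg
      nlinarith [key, hβ, hcoefpos]
    have hcoef_le : ((i + 1 : ℕ) : ℝ) / x * (x.choose (i + 1) : ℝ) ≤ 2 ^ (x - 1) := by
      rw [div_mul_eq_mul_div, div_le_iff₀ hxpos]
      nlinarith [hle]
    nlinarith [key, hdpos, hcoef_le]
  -- telescoping sum
  have hsum : ((x - 1 : ℕ) : ℝ) * (2 * β) ≤ η (x - 1) * 2 ^ (x - 1) := by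
    calc ((x - 1 : ℕ) : ℝ) * (2 * β)
        = ∑ _i ∈ Finset.range (x - 1), 2 * β := by
          rw [Finset.sum_const, Finset.card_range, nsmul_eq_mul]
      _ ≤ ∑ i ∈ Finset.range (x - 1), (η (i + 1) - η i) * 2 ^ (x - 1) :=
          Finset.sum_le_sum hstep
      _ = (η (x - 1) - η 0) * 2 ^ (x - 1) := by
          rw [← Finset.sum_mul, Finset.sum_range_sub]
      _ = η (x - 1) * 2 ^ (x - 1) := by rw [h0]; ring
  have hxm1 : ((x - 1 : ℕ) : ℝ) = (x : ℝ) - 1 := by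
    push_cast [Nat.cast_sub (by omega : 1 ≤ x)]; ring
  have h2x : (2 : ℝ) ^ x = 2 * 2 ^ (x - 1) := by
    rw [← pow_succ']
    congr 1
    omega
  have hmain : ((x : ℝ) - 1) * (2 * β) ≤ (1 - β) * 2 ^ (x - 1) := by
    rw [← hxm1]
    have : η (x - 1) ≤ 1 - β := by linarith [htop, hηx]
    nlinarith [hsum, hpow]
  have hden : (0 : ℝ) < 2 * x + 2 ^ x := by positivity
  rw [le_div_iff₀ hden, h2x]
  nlinarith [hmain, hβ, hx1, mul_pos hβ hpow, mul_pos hβ hxpos]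
end
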